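/- For every a ∈ ℂ and every ζ ∈ ℂ with ζ³ = 1, one has D_a(ζ) = 18·ζ² ≠ 0, R_a(ζ) = ζ, the derivative of R_a at ζ is 0, and the second derivative of R_a at ζ is 0. (Each third root of unity is a super-attracting fixed point of R_a of local degree 3.) -/

import Mathlib

/-- The rational map `R_a` obtained from the Chebyshev–Halley method applied to `z^3-1`. -/
noncomputable def Ra (a z : ℂ) : ℂ :=
  (2*a*z^6 + (15 - a)*z^3 + (3 - a)) / (3*z^2*(5 - a + (1 + a)*z^3))

/-- The denominator of `R_a`. -/
noncomputable def Da (a z : ℂ) : ℂ := 3*z^2*(5 - a + (1 + a)*z^3)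

private lemma hasDerivAt_Da (a z : ℂ) :
    HasDerivAt (Da a) ((30-6*a)*z + (15+15*a)*z^4) z := by
  have h : HasDerivAt (fun z : ℂ => (15-3*a)*z^2 + (3+3*a)*z^5)
      ((15-3*a)*(2*z^(2-1)) + (3+3*a)*(5*z^(5-1))) z := by
    exact (((hasDerivAt_pow 2 z).const_mul (15-3*a)).add
      ((hasDerivAt_pow 5 z).const_mul (3+3*a)))
  have hfun : Da a = fun z : ℂ => (15-3*a)*z^2 + (3+3*a)*z^5 := by
    funext w; simp only [Da]; ring
  rw [hfun]
  convert h using 1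
  norm_num; ring

private lemma hasDerivAt_Na (a z : ℂ) :
    HasDerivAt (fun z : ℂ => 2*a*z^6 + (15 - a)*z^3 + (3 - a))
      (12*a*z^5 + (45-3*a)*z^2) z := by
  have h := (((hasDerivAt_pow 6 z).const_mul (2*a)).add
      ((hasDerivAt_pow 3 z).const_mul (15-a))).add_const (3-a)
  refine h.congr_deriv (Eq.symm ?_)
  norm_num; ring

/-- Explicit formula for the derivative of `Ra a`. -/
noncomputable def Fa (a z : ℂ) : ℂ :=
  ((12*a*z^5 + (45-3*a)*z^2) * Da a z
    - (2*a*z^6 + (15 - a)*z^3 + (3 - a)) * ((30-6*a)*z + (15+15*a)*z^4)) / (Da a z)^2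

private lemma hasDerivAt_Ra (a z : ℂ) (hz : Da a z ≠ 0) :
    HasDerivAt (Ra a) (Fa a z) z := by
  have h := (hasDerivAt_Na a z).div (hasDerivAt_Da a z) hz
  have hfun : Ra a = fun z : ℂ =>
      (2*a*z^6 + (15 - a)*z^3 + (3 - a)) / Da a z := by
    funext w; simp only [Ra, Da]
  rw [hfun]
  exact h

theorem stmt_3 (a ζ : ℂ) (hζ : ζ^3 = 1) :
    Da a ζ = 18*ζ^2 ∧ Da a ζ ≠ 0 ∧ Ra a ζ = ζ ∧
    deriv (Ra a) ζ = 0 ∧ iteratedDeriv 2 (Ra a) ζ = 0 := by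
  have hz0 : ζ ≠ 0 := by
    intro h; rw [h] at hζ; norm_num at hζ
  have h4 : ζ^4 = ζ := by linear_combination ζ*hζ
  have h5 : ζ^5 = ζ^2 := by linear_combination ζ^2*hζ
  have h6 : ζ^6 = 1 := by linear_combination (ζ^3+1)*hζ
  have h7 : ζ^7 = ζ := by linear_combination (ζ^4+ζ)*hζ
  have h8 : ζ^8 = ζ^2 := by linear_combination (ζ^5+ζ^2)*hζ
  have h9 : ζ^9 = 1 := by linear_combination (ζ^6+ζ^3+1)*hζ
  have h10 : ζ^10 = ζ := by linear_combination (ζ^7+ζ^4+ζ)*hζ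
  have h11 : ζ^11 = ζ^2 := by linear_combination (ζ^8+ζ^5+ζ^2)*hζ
  have h12 : ζ^12 = 1 := by linear_combination (ζ^9+ζ^6+ζ^3+1)*hζ
  have h13 : ζ^13 = ζ := by linear_combination (ζ^10+ζ^7+ζ^4+ζ)*hζ
  have h14 : ζ^14 = ζ^2 := by linear_combination (ζ^11+ζ^8+ζ^5+ζ^2)*hζ
  have h15 : ζ^15 = 1 := by linear_combination (ζ^12+ζ^9+ζ^6+ζ^3+1)*hζ
  have h16 : ζ^16 = ζ := by linear_combination (ζ^13+ζ^10+ζ^7+ζ^4+ζ)*hζ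
  have hD : Da a ζ = 18*ζ^2 := by
    simp only [Da]; linear_combination 3*ζ^2*(1+a)*hζ
  have hDne : Da a ζ ≠ 0 := by
    rw [hD]; exact mul_ne_zero (by norm_num) (pow_ne_zero 2 hz0)
  have hR : Ra a ζ = ζ := by
    have hden : (3*ζ^2*(5 - a + (1 + a)*ζ^3)) ≠ 0 := by
      have : (3*ζ^2*(5 - a + (1 + a)*ζ^3)) = Da a ζ := rfl
      rw [this]; exact hDne
    rw [Ra, div_eq_iff hden]
    linear_combination ((a-3) - (3+a)*ζ^3)*hζ
  -- eventually Da ≠ 0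
  have hcont : Continuous fun z => Da a z := by
    unfold Da; continuity
  have hopen : ∀ᶠ z in nhds ζ, Da a z ≠ 0 :=
    hcont.continuousAt.eventually_ne hDne
  have hderiv_eq : ∀ᶠ z in nhds ζ, deriv (Ra a) z = Fa a z := by
    filter_upwards [hopen] with z hz
    exact (hasDerivAt_Ra a z hz).deriv
  have hd1 : deriv (Ra a) ζ = 0 := by
    rw [(hasDerivAt_Ra a ζ hDne).deriv]
    simp only [Fa]
    rw [div_eq_zero_iff]; left
    simp only [Da]
    ring_nf
    simp only [h4, h5, h6, h7, h8, h9, h10, h11, h12, h13, h14, h15, h16]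
    ring
  have hFa : HasDerivAt (Fa a) 0 ζ := by
    have hP : HasDerivAt (fun z : ℂ =>
        (12*a*z^5 + (45-3*a)*z^2) * Da a z
          - (2*a*z^6 + (15 - a)*z^3 + (3 - a)) * ((30-6*a)*z + (15+15*a)*z^4))
        (((60*a*ζ^4 + (90-6*a)*ζ) * Da a ζ
            + (12*a*ζ^5 + (45-3*a)*ζ^2) * ((30-6*a)*ζ + (15+15*a)*ζ^4))
          - ((12*a*ζ^5 + (45-3*a)*ζ^2) * ((30-6*a)*ζ + (15+15*a)*ζ^4)
            + (2*a*ζ^6 + (15 - a)*ζ^3 + (3 - a)) * ((30-6*a) + (60+60*a)*ζ^3))) ζ := by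
      have hN' : HasDerivAt (fun z : ℂ => 12*a*z^5 + (45-3*a)*z^2)
          (60*a*ζ^4 + (90-6*a)*ζ) ζ := by
        have h := ((hasDerivAt_pow 5 ζ).const_mul (12*a)).add
          ((hasDerivAt_pow 2 ζ).const_mul (45-3*a))
        refine h.congr_deriv (Eq.symm ?_); norm_num; ring
      have hD' : HasDerivAt (fun z : ℂ => (30-6*a)*z + (15+15*a)*z^4)
          ((30-6*a) + (60+60*a)*ζ^3) ζ := by
        have h := ((hasDerivAt_id ζ).const_mul (30-6*a)).add
          ((hasDerivAt_pow 4 ζ).const_mul (15+15*a))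
        refine h.congr_deriv (Eq.symm ?_); norm_num; ring
      exact (hN'.mul (hasDerivAt_Da a ζ)).sub ((hasDerivAt_Na a ζ).mul hD')
    have hQ : HasDerivAt (fun z : ℂ => (Da a z)^2)
        (2 * Da a ζ * ((30-6*a)*ζ + (15+15*a)*ζ^4)) ζ := by
      have h := (hasDerivAt_Da a ζ).pow 2
      refine h.congr_deriv (Eq.symm ?_); push_cast; ring
    have hQne : (Da a ζ)^2 ≠ 0 := pow_ne_zero 2 hDne
    have h := hP.div hQ hQne
    refine h.congr_deriv (Eq.symm ?_)
    rw [eq_comm, div_eq_zero_iff]; left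
    simp only [Da]
    ring_nf
    simp only [h4, h5, h6, h7, h8, h9, h10, h11, h12, h13, h14, h15, h16]
    ring
  have hd2 : iteratedDeriv 2 (Ra a) ζ = 0 := by
    rw [iteratedDeriv_succ, iteratedDeriv_one]
    have : deriv (deriv (Ra a)) ζ = deriv (Fa a) ζ :=
      Filter.EventuallyEq.deriv_eq hderiv_eq
    rw [this, hFa.deriv]
  exact ⟨hD, hDne, hR, hd1, hd2⟩
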